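/- Let G₁ be the simple graph on vertex set {1,2,3,4,5,6} with edge set {{1,2},{1,3},{1,4},{2,5},{2,6},{3,5},{3,6},{4,5},{4,6}} (the complete bipartite graph K_{3,3} with parts {1,5,6} and {2,3,4}), and let G = G₁ + e{1,6} + e{2,3} + e{3,4} be the graph obtained by adding the three edges {1,6}, {2,3}, {3,4}. Then the second smallest and the largest Laplacian eigenvalues are unchanged: λ₂(G) = λ₂(G₁) = 3 and λ₆(G) = λ₆(G₁) = 6, so r(G) = r(G₁) = 1/2. -/

import Mathlib

open Matrix

/-- The Laplacian eigenvalues of a simple graph on `Fin N`, listed in nondecreasing order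
with multiplicity; `sortedLapEigs G i` is the `(i+1)`-st smallest Laplacian eigenvalue. -/
noncomputable def sortedLapEigs {N : ℕ} (G : SimpleGraph (Fin N)) : Fin N → ℝ :=
  letI := Classical.decRel G.Adj
  let f : Fin N → ℝ := (SimpleGraph.posSemidef_lapMatrix ℝ G).isHermitian.eigenvalues
  f ∘ Tuple.sort f

/-- The graph `G₁` of the paper: `K_{3,3}` with parts `{1,5,6}` and `{2,3,4}`, on
vertices `0, …, 5` (labelled `1, …, 6` in the paper). -/
def G₁6 : SimpleGraph (Fin 6) :=
  SimpleGraph.fromEdgeSet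
    {s(0, 1), s(0, 2), s(0, 3), s(1, 4), s(1, 5), s(2, 4), s(2, 5), s(3, 4), s(3, 5)}

/-- `G = G₁ + e{1,6} + e{2,3} + e{3,4}` (here `{0,5}`, `{1,2}` and `{2,3}`). -/
def G₁6' : SimpleGraph (Fin 6) :=
  G₁6 ⊔ SimpleGraph.edge 0 5 ⊔ SimpleGraph.edge 1 2 ⊔ SimpleGraph.edge 2 3

/-! ### Auxiliary: decidability of adjacency -/

instance iG1 : DecidableRel G₁6.Adj := fun a b =>
  decidable_of_iff ((s(a,b) = s(0,1) ∨ s(a,b) = s(0,2) ∨ s(a,b) = s(0,3) ∨ s(a,b) = s(1,4) ∨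
      s(a,b) = s(1,5) ∨ s(a,b) = s(2,4) ∨ s(a,b) = s(2,5) ∨ s(a,b) = s(3,4) ∨ s(a,b) = s(3,5)) ∧ a ≠ b)
    (by rw [G₁6, SimpleGraph.fromEdgeSet_adj]; simp [Set.mem_insert_iff])

instance iG2 : DecidableRel G₁6'.Adj := fun a b =>
  decidable_of_iff (G₁6.Adj a b ∨ ((a = 0 ∧ b = 5 ∨ a = 5 ∧ b = 0) ∧ a ≠ b) ∨
      ((a = 1 ∧ b = 2 ∨ a = 2 ∧ b = 1) ∧ a ≠ b) ∨ ((a = 2 ∧ b = 3 ∨ a = 3 ∧ b = 2) ∧ a ≠ b))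
    (by rw [G₁6']; simp only [SimpleGraph.sup_adj, SimpleGraph.edge_adj]; tauto)

/-! ### The two Laplacian matrices, over `ℤ` -/

def Z1 : Matrix (Fin 6) (Fin 6) ℤ :=
  !![3, -1, -1, -1, 0, 0; -1, 3, 0, 0, -1, -1; -1, 0, 3, 0, -1, -1;
     -1, 0, 0, 3, -1, -1; 0, -1, -1, -1, 3, 0; 0, -1, -1, -1, 0, 3]

def Z2 : Matrix (Fin 6) (Fin 6) ℤ :=
  !![4, -1, -1, -1, 0, -1; -1, 4, -1, 0, -1, -1; -1, -1, 5, -1, -1, -1;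
     -1, 0, -1, 4, -1, -1; 0, -1, -1, -1, 3, 0; -1, -1, -1, -1, 0, 4]

lemma lapZ1 : SimpleGraph.lapMatrix ℤ G₁6 = Z1 := by
  simp only [SimpleGraph.lapMatrix, SimpleGraph.degMatrix, SimpleGraph.degree,
    SimpleGraph.neighborFinset_eq_filter]
  decide

lemma lapZ2 : SimpleGraph.lapMatrix ℤ G₁6' = Z2 := by
  simp only [SimpleGraph.lapMatrix, SimpleGraph.degMatrix, SimpleGraph.degree,
    SimpleGraph.neighborFinset_eq_filter]
  decide

/-- The real Laplacian is the cast of the integer Laplacian. -/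
lemma lapR_eq_cast (G : SimpleGraph (Fin 6)) (inst : DecidableRel G.Adj) :
    (SimpleGraph.lapMatrix ℝ G : Matrix (Fin 6) (Fin 6) ℝ) =
      (SimpleGraph.lapMatrix ℤ G).map ((↑) : ℤ → ℝ) := by
  ext i j
  simp only [SimpleGraph.lapMatrix, SimpleGraph.degMatrix, SimpleGraph.adjMatrix,
    Matrix.sub_apply, Matrix.diagonal_apply, Matrix.map_apply, Matrix.of_apply]
  push_cast [apply_ite ((↑) : ℤ → ℝ)]
  ring

lemma lapR1 (inst : DecidableRel G₁6.Adj) :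
    SimpleGraph.lapMatrix ℝ G₁6 = Z1.map ((↑) : ℤ → ℝ) := by
  rw [lapR_eq_cast G₁6 inst]
  have h : inst = iG1 := Subsingleton.elim _ _
  subst h
  rw [lapZ1]

lemma lapR2 (inst : DecidableRel G₁6'.Adj) :
    SimpleGraph.lapMatrix ℝ G₁6' = Z2.map ((↑) : ℤ → ℝ) := by
  rw [lapR_eq_cast G₁6' inst]
  have h : inst = iG2 := Subsingleton.elim _ _
  subst h
  rw [lapZ2]

/-! ### Transfer of matrix identities from `ℤ` to `ℝ` -/

def castM (Z : Matrix (Fin 6) (Fin 6) ℤ) : Matrix (Fin 6) (Fin 6) ℝ :=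
  Z.map ((↑) : ℤ → ℝ)

lemma castM_mul (A B : Matrix (Fin 6) (Fin 6) ℤ) : castM (A * B) = castM A * castM B :=
  Matrix.map_mul (f := Int.castRingHom ℝ)

lemma castM_sub_smul_one (A : Matrix (Fin 6) (Fin 6) ℤ) (c : ℤ) :
    castM (A - c • 1) = castM A - (c : ℝ) • 1 := by
  ext i j
  simp only [castM, Matrix.map_apply, Matrix.sub_apply, Matrix.smul_apply, Matrix.one_apply,
    smul_eq_mul]
  push_cast [apply_ite ((↑) : ℤ → ℝ)]
  ring

lemma castM_trace (A : Matrix (Fin 6) (Fin 6) ℤ) :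
    Matrix.trace (castM A) = ((Matrix.trace A : ℤ) : ℝ) := by
  simp [castM, Matrix.trace, Matrix.diag, Matrix.map_apply]

/-! ### Eigenvalue tools -/

lemma factor_step {A B : Matrix (Fin 6) (Fin 6) ℝ} {v : Fin 6 → ℝ} {μ q : ℝ}
    (hv : A *ᵥ v = μ • v) (hB : B *ᵥ v = q • v) (a : ℝ) :
    ((A - a • 1) * B) *ᵥ v = ((μ - a) * q) • v := by
  rw [← Matrix.mulVec_mulVec, hB, Matrix.mulVec_smul, Matrix.sub_mulVec, hv,
    Matrix.smul_mulVec, Matrix.one_mulVec, ← sub_smul, smul_smul, mul_comm]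

lemma scalar_zero_of_matrix_zero {A B : Matrix (Fin 6) (Fin 6) ℝ} (hA : A.IsHermitian) (i : Fin 6)
    {q : ℝ → ℝ}
    (hchain : ∀ (v : Fin 6 → ℝ) (μ : ℝ), A *ᵥ v = μ • v → B *ᵥ v = q μ • v)
    (hB : B = 0) : q (hA.eigenvalues i) = 0 := by
  have hv := hA.mulVec_eigenvectorBasis i
  have h := hchain _ _ hv
  rw [hB, Matrix.zero_mulVec] at h
  have hne : (⇑(hA.eigenvectorBasis i) : Fin 6 → ℝ) ≠ 0 := by
    have := hA.eigenvectorBasis.toBasis.ne_zero i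
    simpa using this
  rcases smul_eq_zero.mp h.symm with h' | h'
  · exact h'
  · exact absurd h' hne

lemma trace_eq_sum_eigenvalues {A : Matrix (Fin 6) (Fin 6) ℝ} (hA : A.IsHermitian) :
    Matrix.trace A = ∑ i, hA.eigenvalues i := by
  nth_rewrite 1 [hA.spectral_theorem]
  rw [Unitary.conjStarAlgAut_apply]
  rw [Matrix.trace_mul_comm, ← mul_assoc,
    (Matrix.mem_unitaryGroup_iff').mp (Matrix.IsHermitian.eigenvectorUnitary hA).2, one_mul]
  simp [Matrix.trace_diagonal, RCLike.ofReal_real_eq_id]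

lemma trace_sq_eq_sum_eigenvalues_sq {A : Matrix (Fin 6) (Fin 6) ℝ} (hA : A.IsHermitian) :
    Matrix.trace (A * A) = ∑ i, (hA.eigenvalues i) ^ 2 := by
  set U : Matrix (Fin 6) (Fin 6) ℝ := (Matrix.IsHermitian.eigenvectorUnitary hA : Matrix (Fin 6) (Fin 6) ℝ) with hU
  set D : Matrix (Fin 6) (Fin 6) ℝ := Matrix.diagonal (RCLike.ofReal ∘ hA.eigenvalues) with hD
  have hUU : star U * U = 1 :=
    (Matrix.mem_unitaryGroup_iff').mp (Matrix.IsHermitian.eigenvectorUnitary hA).2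
  have hAU : A = U * D * star U := hA.spectral_theorem
  have : A * A = U * (D * D) * star U := by
    rw [hAU]
    calc U * D * star U * (U * D * star U) = U * D * (star U * U) * (D * star U) := by
          noncomm_ring
      _ = U * (D * D) * star U := by rw [hUU]; noncomm_ring
  rw [this, Matrix.trace_mul_comm, ← mul_assoc, hUU, one_mul, hD]
  rw [Matrix.diagonal_mul_diagonal, Matrix.trace_diagonal]
  simp [RCLike.ofReal_real_eq_id, pow_two]

/-! ### Combinatorial finishing lemmas -/

lemma finish_G1 (g : Fin 6 → ℝ) (mono : Monotone g)
    (mem : ∀ i, g i = 0 ∨ g i = 3 ∨ g i = 6)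
    (hsum : g 0 + g 1 + g 2 + g 3 + g 4 + g 5 = 18)
    (hsq : g 0 ^ 2 + g 1 ^ 2 + g 2 ^ 2 + g 3 ^ 2 + g 4 ^ 2 + g 5 ^ 2 = 72) :
    g 1 = 3 ∧ g 5 = 6 := by
  have hb : ∀ i, 0 ≤ g i ∧ g i ≤ 6 := by
    intro i; rcases mem i with h | h | h <;> rw [h] <;> norm_num
  have hquad : ∀ i, (g i - 3) * (g i - 6) ≥ 0 := by
    intro i; rcases mem i with h | h | h <;> rw [h] <;> norm_num
  have h5 : g 5 = 6 := by
    rcases mem 5 with h | h | h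
    · -- all zero, contradiction with sum
      have h0 := (hb 0).1
      have h1 := mono (show (0:Fin 6) ≤ 1 by decide)
      have h2 := mono (show (1:Fin 6) ≤ 2 by decide)
      have h3 := mono (show (2:Fin 6) ≤ 3 by decide)
      have h4 := mono (show (3:Fin 6) ≤ 4 by decide)
      have h5' := mono (show (4:Fin 6) ≤ 5 by decide)
      rw [h] at h5'
      linarith
    · -- g 5 = 3, so all g i ≤ 3, and each g i ∈ {0,3}: g i ^ 2 = 3 * g i
      exfalso
      have hle : ∀ i, g i ≤ 3 := by
        intro i
        have := mono (show i ≤ 5 from Fin.le_last i)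
        rw [h] at this; exact this
      have hsq3 : ∀ i, g i ^ 2 = 3 * g i := by
        intro i
        rcases mem i with h' | h' | h'
        · rw [h']; norm_num
        · rw [h']; norm_num
        · exfalso; have := hle i; rw [h'] at this; linarith
      have e0 := hsq3 0; have e1 := hsq3 1; have e2 := hsq3 2
      have e3 := hsq3 3; have e4 := hsq3 4; have e5 := hsq3 5
      linarith
    · exact h
  refine ⟨?_, h5⟩
  have h1mem := mem 1
  rcases h1mem with h1 | h1 | h1
  · -- g 1 = 0 forces g 0 = 0, then quadratic bound gives contradiction
    exfalso
    have hg0 : g 0 = 0 := by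
      have := mono (show (0:Fin 6) ≤ 1 by decide)
      rw [h1] at this
      have := (hb 0).1
      linarith
    have hq : ∀ i, g i ^ 2 - 9 * g i + 18 ≥ 0 := by
      intro i; have := hquad i; nlinarith
    rw [hg0, h1] at hsum hsq
    have hq2 := hq 2; have hq3 := hq 3; have hq4 := hq 4; have hq5 := hq 5
    norm_num at hsum hsq
    linarith
  · exact h1
  · -- g 1 = 6 forces everything above to be 6, sum too big
    exfalso
    have h2 := mono (show (1:Fin 6) ≤ 2 by decide)
    have h3 := mono (show (1:Fin 6) ≤ 3 by decide)
    have h4 := mono (show (1:Fin 6) ≤ 4 by decide)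
    have h5' := mono (show (1:Fin 6) ≤ 5 by decide)
    rw [h1] at h2 h3 h4 h5'
    have := (hb 0).1
    have b2 := (hb 2).2; have b3 := (hb 3).2; have b4 := (hb 4).2; have b5 := (hb 5).2
    linarith

lemma finish_G2 (g : Fin 6 → ℝ) (mono : Monotone g)
    (mem : ∀ i, g i = 0 ∨ g i = 3 ∨ g i = 4 ∨ g i = 5 ∨ g i = 6)
    (hsum : g 0 + g 1 + g 2 + g 3 + g 4 + g 5 = 24)
    (hsq : g 0 ^ 2 + g 1 ^ 2 + g 2 ^ 2 + g 3 ^ 2 + g 4 ^ 2 + g 5 ^ 2 = 122) :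
    g 1 = 3 ∧ g 5 = 6 := by
  have hb : ∀ i, 0 ≤ g i ∧ g i ≤ 6 := by
    intro i; rcases mem i with h | h | h | h | h <;> rw [h] <;> norm_num
  have h5 : g 5 = 6 := by
    by_contra h
    have h5le : g 5 ≤ 5 := by
      rcases mem 5 with h' | h' | h' | h' | h'
      · rw [h']; norm_num
      · rw [h']; norm_num
      · rw [h']; norm_num
      · rw [h']
      · exact absurd h' h
    have hle : ∀ i, g i ≤ 5 := by
      intro i
      have := mono (show i ≤ 5 from Fin.le_last i)
      linarith
    have hsq5 : ∀ i, g i ^ 2 ≤ 5 * g i := by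
      intro i
      have h1 := (hb i).1
      have h2 := hle i
      nlinarith
    have e0 := hsq5 0; have e1 := hsq5 1; have e2 := hsq5 2
    have e3 := hsq5 3; have e4 := hsq5 4; have e5 := hsq5 5
    linarith
  refine ⟨?_, h5⟩
  rcases mem 1 with h1 | h1 | h1 | h1 | h1
  · -- g1 = 0 → g0 = 0 → g2..g5 all = 6 → sumsq = 144 ≠ 122
    exfalso
    have hg0 : g 0 = 0 := by
      have := mono (show (0:Fin 6) ≤ 1 by decide)
      rw [h1] at this
      have := (hb 0).1
      linarith
    have b2 := (hb 2).2; have b3 := (hb 3).2; have b4 := (hb 4).2; have b5 := (hb 5).2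
    have hg2 : g 2 = 6 := by linarith
    have hg3 : g 3 = 6 := by linarith
    have hg4 : g 4 = 6 := by linarith
    have hg5 : g 5 = 6 := by linarith
    rw [hg0, h1, hg2, hg3, hg4, hg5] at hsq
    norm_num at hsq
  · exact h1
  all_goals {
    -- g1 ≥ 4; quadratic bounds give Σ g² ≤ 120 < 122
    exfalso
    have hg1 : 4 ≤ g 1 := by norm_num [h1]
    have hge : ∀ i : Fin 6, 1 ≤ i → 4 ≤ g i := fun i hi => le_trans hg1 (mono hi)
    have hgq : ∀ i : Fin 6, 1 ≤ i → g i ^ 2 ≤ 10 * g i - 24 := by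
      intro i hi
      have h4 := hge i hi
      have h6 := (hb i).2
      nlinarith [mul_nonneg (sub_nonneg.mpr h4) (sub_nonneg.mpr h6)]
    have e1 := hgq 1 (by decide); have e2 := hgq 2 (by decide); have e3 := hgq 3 (by decide)
    have e4 := hgq 4 (by decide); have e5 := hgq 5 (by decide)
    have h01 := (hb 0).1
    have h02 := (hb 0).2
    have h0q : g 0 ^ 2 ≤ 6 * g 0 := by
      rcases mem 0 with h | h | h | h | h <;> rw [h] <;> norm_num
    linarith
  }

/-! ### Per-graph main lemmas -/

lemma sorted_eval_G1 {A : Matrix (Fin 6) (Fin 6) ℝ} (hA : A.IsHermitian)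
    (hmem : ∀ i, hA.eigenvalues i = 0 ∨ hA.eigenvalues i = 3 ∨ hA.eigenvalues i = 6)
    (htr : ∑ i, hA.eigenvalues i = 18) (htr2 : ∑ i, (hA.eigenvalues i) ^ 2 = 72) :
    (hA.eigenvalues ∘ Tuple.sort hA.eigenvalues) 1 = 3 ∧
      (hA.eigenvalues ∘ Tuple.sort hA.eigenvalues) 5 = 6 := by
  set f := hA.eigenvalues with hf
  set g := f ∘ Tuple.sort f with hg
  have mono : Monotone g := Tuple.monotone_sort f
  have mem : ∀ i, g i = 0 ∨ g i = 3 ∨ g i = 6 := fun i => hmem _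
  have e1 : ∑ i, g i = ∑ i, f i := by
    simpa [hg, Function.comp] using Equiv.sum_comp (Tuple.sort f) f
  have e2 : ∑ i, g i ^ 2 = ∑ i, f i ^ 2 := by
    simpa [hg, Function.comp] using Equiv.sum_comp (Tuple.sort f) (fun j => f j ^ 2)
  have hsum : g 0 + g 1 + g 2 + g 3 + g 4 + g 5 = 18 := by
    rw [← Fin.sum_univ_six g, e1]; exact htr
  have hsq : g 0 ^ 2 + g 1 ^ 2 + g 2 ^ 2 + g 3 ^ 2 + g 4 ^ 2 + g 5 ^ 2 = 72 := by
    rw [← Fin.sum_univ_six (fun i => g i ^ 2), e2]; exact htr2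
  exact finish_G1 g mono mem hsum hsq

lemma sorted_eval_G2 {A : Matrix (Fin 6) (Fin 6) ℝ} (hA : A.IsHermitian)
    (hmem : ∀ i, hA.eigenvalues i = 0 ∨ hA.eigenvalues i = 3 ∨ hA.eigenvalues i = 4 ∨
      hA.eigenvalues i = 5 ∨ hA.eigenvalues i = 6)
    (htr : ∑ i, hA.eigenvalues i = 24) (htr2 : ∑ i, (hA.eigenvalues i) ^ 2 = 122) :
    (hA.eigenvalues ∘ Tuple.sort hA.eigenvalues) 1 = 3 ∧
      (hA.eigenvalues ∘ Tuple.sort hA.eigenvalues) 5 = 6 := by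
  set f := hA.eigenvalues with hf
  set g := f ∘ Tuple.sort f with hg
  have mono : Monotone g := Tuple.monotone_sort f
  have mem : ∀ i, g i = 0 ∨ g i = 3 ∨ g i = 4 ∨ g i = 5 ∨ g i = 6 := fun i => hmem _
  have e1 : ∑ i, g i = ∑ i, f i := by
    simpa [hg, Function.comp] using Equiv.sum_comp (Tuple.sort f) f
  have e2 : ∑ i, g i ^ 2 = ∑ i, f i ^ 2 := by
    simpa [hg, Function.comp] using Equiv.sum_comp (Tuple.sort f) (fun j => f j ^ 2)
  have hsum : g 0 + g 1 + g 2 + g 3 + g 4 + g 5 = 24 := by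
    rw [← Fin.sum_univ_six g, e1]; exact htr
  have hsq : g 0 ^ 2 + g 1 ^ 2 + g 2 ^ 2 + g 3 ^ 2 + g 4 ^ 2 + g 5 ^ 2 = 122 := by
    rw [← Fin.sum_univ_six (fun i => g i ^ 2), e2]; exact htr2
  exact finish_G2 g mono mem hsum hsq

lemma G1_main : sortedLapEigs G₁6 1 = 3 ∧ sortedLapEigs G₁6 5 = 6 := by
  letI inst : DecidableRel G₁6.Adj := Classical.decRel _
  have hlap : SimpleGraph.lapMatrix ℝ G₁6 = castM Z1 := lapR1 inst
  set A := SimpleGraph.lapMatrix ℝ G₁6 with hA_def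
  have hA : A.IsHermitian := (SimpleGraph.posSemidef_lapMatrix ℝ G₁6).isHermitian
  have hzero : (A - (3:ℝ) • 1) * ((A - (6:ℝ) • 1) * A) = 0 := by
    have key : castM ((Z1 - (3:ℤ) • 1) * ((Z1 - (6:ℤ) • 1) * Z1)) =
        (castM Z1 - (3:ℝ) • 1) * ((castM Z1 - (6:ℝ) • 1) * castM Z1) := by
      rw [castM_mul, castM_mul, castM_sub_smul_one, castM_sub_smul_one]
      norm_num
    rw [hlap, ← key, show (Z1 - (3:ℤ) • 1) * ((Z1 - (6:ℤ) • 1) * Z1) = 0 by decide]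
    ext i j
    simp [castM]
  have hmem : ∀ i, hA.eigenvalues i = 0 ∨ hA.eigenvalues i = 3 ∨ hA.eigenvalues i = 6 := by
    intro i
    have h := scalar_zero_of_matrix_zero hA i
      (q := fun μ => (μ - 3) * ((μ - 6) * μ))
      (fun v μ hv => by
        have step1 : A *ᵥ v = μ • v := hv
        have step2 : ((A - (6:ℝ) • 1) * A) *ᵥ v = ((μ - 6) * μ) • v := factor_step hv step1 6
        exact factor_step hv step2 3) hzero
    rcases mul_eq_zero.mp h with h' | h'
    · right; left; linarith [sub_eq_zero.mp h']
    · rcases mul_eq_zero.mp h' with h'' | h''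
      · right; right; linarith [sub_eq_zero.mp h'']
      · left; exact h''
  have htr : ∑ i, hA.eigenvalues i = 18 := by
    rw [← trace_eq_sum_eigenvalues hA, hlap, castM_trace,
      show Matrix.trace Z1 = 18 by decide]
    norm_num
  have htr2 : ∑ i, (hA.eigenvalues i) ^ 2 = 72 := by
    rw [← trace_sq_eq_sum_eigenvalues_sq hA, hlap, ← castM_mul, castM_trace,
      show Matrix.trace (Z1 * Z1) = 72 by decide]
    norm_num
  exact sorted_eval_G1 hA hmem htr htr2

lemma G2_main : sortedLapEigs G₁6' 1 = 3 ∧ sortedLapEigs G₁6' 5 = 6 := by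
  letI inst : DecidableRel G₁6'.Adj := Classical.decRel _
  have hlap : SimpleGraph.lapMatrix ℝ G₁6' = castM Z2 := lapR2 inst
  set A := SimpleGraph.lapMatrix ℝ G₁6' with hA_def
  have hA : A.IsHermitian := (SimpleGraph.posSemidef_lapMatrix ℝ G₁6').isHermitian
  have hzero : (A - (3:ℝ) • 1) * ((A - (4:ℝ) • 1) * ((A - (5:ℝ) • 1) * ((A - (6:ℝ) • 1) * A))) = 0 := by
    have key : castM ((Z2 - (3:ℤ) • 1) * ((Z2 - (4:ℤ) • 1) * ((Z2 - (5:ℤ) • 1) * ((Z2 - (6:ℤ) • 1) * Z2)))) =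
        (castM Z2 - (3:ℝ) • 1) * ((castM Z2 - (4:ℝ) • 1) * ((castM Z2 - (5:ℝ) • 1) *
          ((castM Z2 - (6:ℝ) • 1) * castM Z2))) := by
      rw [castM_mul, castM_mul, castM_mul, castM_mul, castM_sub_smul_one, castM_sub_smul_one,
        castM_sub_smul_one, castM_sub_smul_one]
      norm_num
    rw [hlap, ← key,
      show (Z2 - (3:ℤ) • 1) * ((Z2 - (4:ℤ) • 1) * ((Z2 - (5:ℤ) • 1) * ((Z2 - (6:ℤ) • 1) * Z2))) = 0 by decide]
    ext i j
    simp [castM]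
  have hmem : ∀ i, hA.eigenvalues i = 0 ∨ hA.eigenvalues i = 3 ∨ hA.eigenvalues i = 4 ∨
      hA.eigenvalues i = 5 ∨ hA.eigenvalues i = 6 := by
    intro i
    have h := scalar_zero_of_matrix_zero hA i
      (q := fun μ => (μ - 3) * ((μ - 4) * ((μ - 5) * ((μ - 6) * μ))))
      (fun v μ hv => by
        have s1 : ((A - (6:ℝ) • 1) * A) *ᵥ v = ((μ - 6) * μ) • v := factor_step hv hv 6
        have s2 := factor_step hv s1 5
        have s3 := factor_step hv s2 4
        exact factor_step hv s3 3) hzero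
    rcases mul_eq_zero.mp h with h' | h'
    · right; left; linarith [sub_eq_zero.mp h']
    rcases mul_eq_zero.mp h' with h'' | h''
    · right; right; left; linarith [sub_eq_zero.mp h'']
    rcases mul_eq_zero.mp h'' with h3 | h3
    · right; right; right; left; linarith [sub_eq_zero.mp h3]
    rcases mul_eq_zero.mp h3 with h4 | h4
    · right; right; right; right; linarith [sub_eq_zero.mp h4]
    · left; exact h4
  have htr : ∑ i, hA.eigenvalues i = 24 := by
    rw [← trace_eq_sum_eigenvalues hA, hlap, castM_trace,
      show Matrix.trace Z2 = 24 by decide]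
    norm_num
  have htr2 : ∑ i, (hA.eigenvalues i) ^ 2 = 122 := by
    rw [← trace_sq_eq_sum_eigenvalues_sq hA, hlap, ← castM_mul, castM_trace,
      show Matrix.trace (Z2 * Z2) = 122 by decide]
    norm_num
  exact sorted_eval_G2 hA hmem htr htr2

/-- Adding the three edges `{1,6}, {2,3}, {3,4}` to `G₁` leaves the second
smallest and largest Laplacian eigenvalues unchanged: `λ₂ = 3`, `λ₆ = 6`, `r = 1/2` for
both graphs. -/
theorem addEdges_eigenvalues_unchanged :
    sortedLapEigs G₁6' 1 = 3 ∧ sortedLapEigs G₁6 1 = 3 ∧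
    sortedLapEigs G₁6' 5 = 6 ∧ sortedLapEigs G₁6 5 = 6 ∧
    sortedLapEigs G₁6' 1 / sortedLapEigs G₁6' 5 = 1 / 2 ∧
    sortedLapEigs G₁6 1 / sortedLapEigs G₁6 5 = 1 / 2 := by
  obtain ⟨h1, h2⟩ := G2_main
  obtain ⟨h3, h4⟩ := G1_main
  refine ⟨h1, h3, h2, h4, ?_, ?_⟩
  · rw [h1, h2]; norm_num
  · rw [h3, h4]; norm_num
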